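/- arXiv:1909.06222 — 5 statements merged into one kernel-verified Lean document; each statement's English description precedes it below -/
import Mathlib

section
/- Let f₁,...,f_m be proper, lsc, prox-bounded with thresholds r_i, let r > max_i r_i, let δ : Λ → ℝ be continuous with δ(λ) = 0 iff λ is a unit vector e_i, and define PA_{r,δ}(x,λ) := -e_{r+δ(λ)}( -Σ_i λ_i e_r f_i )(x). Then for each λ ∈ Λ, PA_{r,δ}(·,λ) is a proper (real-valued) function of x. -/
lemma var_identity {E : Type*} [NormedAddCommGroup E] [InnerProductSpace ℝ E] {m : ℕ}
    (lam : Fin m → ℝ) (hsum : ∑ i, lam i = 1) (x0 : Fin m → E) (y : E) :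
    ∑ i, lam i * ‖x0 i - y‖ ^ 2
      = ‖y - ∑ i, lam i • x0 i‖ ^ 2 + ∑ i, lam i * ‖x0 i - ∑ j, lam j • x0 j‖ ^ 2 := by
  set xb : E := ∑ j, lam j • x0 j with hxb
  have key : ∀ z : E, (inner ℝ xb z : ℝ) = ∑ i, lam i * inner ℝ (x0 i) z := by
    intro z; simp [hxb, sum_inner, real_inner_smul_left]
  have hni : ∀ a b : E, ‖a - b‖ ^ 2 = ‖a‖^2 - 2 * (inner ℝ a b : ℝ) + ‖b‖^2 := fun a b =>
    norm_sub_sq_real a b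
  have expand : ∀ w : E, ∑ i, lam i * ‖x0 i - w‖ ^ 2
      = ∑ i, lam i * ‖x0 i‖^2 - 2 * (inner ℝ xb w : ℝ) + ‖w‖^2 := by
    intro w
    rw [Finset.sum_congr rfl fun i (_ : i ∈ Finset.univ) =>
      (by rw [hni]; ring : lam i * ‖x0 i - w‖ ^ 2
        = lam i * ‖x0 i‖^2 - 2 * (lam i * inner ℝ (x0 i) w) + lam i * ‖w‖^2),
      Finset.sum_add_distrib, Finset.sum_sub_distrib, ← Finset.mul_sum, ← Finset.sum_mul,
      hsum, key]
    ring
  have hyx : (inner ℝ y xb : ℝ) = inner ℝ xb y := real_inner_comm _ _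
  have hbb : (inner ℝ xb xb : ℝ) = ‖xb‖ ^ 2 := real_inner_self_eq_norm_sq xb
  rw [expand y, hni y xb, expand xb]
  linarith [hyx, hbb]

noncomputable def moreau {n : ℕ} (r : ℝ) (f : EuclideanSpace ℝ (Fin n) → EReal)
    (x : EuclideanSpace ℝ (Fin n)) : EReal :=
  ⨅ y, f y + (((r / 2) * ‖y - x‖ ^ 2 : ℝ) : EReal)

def simplex (m : ℕ) : Set (Fin m → ℝ) :=
  {lam | (∀ i, 0 ≤ lam i) ∧ ∑ i, lam i = 1}

theorem ncProxAverage_proper {n m : ℕ} (f : Fin m → EuclideanSpace ℝ (Fin n) → EReal)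
    (hne_bot : ∀ i x, f i x ≠ ⊥) (hproper : ∀ i, ∃ x, f i x ≠ ⊤)
    (hlsc : ∀ i, LowerSemicontinuous (f i))
    (rth : Fin m → ℝ)
    (hpb : ∀ i, ∀ s : ℝ, rth i < s → ∀ x, moreau s (f i) x ≠ ⊥)
    (r : ℝ) (hr : ∀ i, rth i < r)
    (δ : (Fin m → ℝ) → ℝ)
    (hδcont : ContinuousOn δ (simplex m))
    (hδnn : ∀ lam ∈ simplex m, 0 ≤ δ lam)
    (hδ0 : ∀ lam ∈ simplex m, (δ lam = 0 ↔ ∃ i, lam = Pi.single i 1))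
    (lam : Fin m → ℝ) (hlam : lam ∈ simplex m) :
    (∀ x, -(moreau (r + δ lam)
        (fun y => (((-(∑ i, lam i * (moreau r (f i) y).toReal)) : ℝ) : EReal)) x) ≠ ⊥) ∧
    (∃ x, -(moreau (r + δ lam)
        (fun y => (((-(∑ i, lam i * (moreau r (f i) y).toReal)) : ℝ) : EReal)) x) ≠ ⊤) := by
  obtain ⟨hnn, hsum⟩ := hlam
  have hδ : 0 ≤ δ lam := hδnn lam ⟨hnn, hsum⟩
  set g : EuclideanSpace ℝ (Fin n) → EReal :=
    fun y => (((-(∑ i, lam i * (moreau r (f i) y).toReal)) : ℝ) : EReal) with hg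
  constructor
  · -- part 1 : never ⊥, i.e. moreau ≠ ⊤
    intro x
    rw [Ne, EReal.neg_eq_bot_iff]
    intro htop
    have hle : moreau (r + δ lam) g x ≤ g x
        + ((((r + δ lam) / 2) * ‖x - x‖ ^ 2 : ℝ) : EReal) := iInf_le _ x
    rw [htop, hg] at hle
    simp only [← EReal.coe_add] at hle
    exact (EReal.coe_ne_top _) (top_le_iff.mp hle)
  · -- part 2 : exists x with finite value, i.e. moreau ≠ ⊥ at xbar
    choose x0 hx0 using hproper
    set xb : EuclideanSpace ℝ (Fin n) := ∑ j, lam j • x0 j with hxb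
    set c : Fin m → ℝ := fun i => (f i (x0 i)).toReal with hc
    set V : ℝ := ∑ i, lam i * ‖x0 i - xb‖ ^ 2 with hV
    set B : ℝ := -(∑ i, lam i * c i) - r / 2 * V with hB
    refine ⟨xb, ?_⟩
    rw [Ne, EReal.neg_eq_top_iff]
    have hlow : (B : EReal) ≤ moreau (r + δ lam) g xb := by
      refine le_iInf fun y => ?_
      -- pointwise bound on each envelope
      have henv : ∀ i, (moreau r (f i) y).toReal ≤ c i + r / 2 * ‖x0 i - y‖ ^ 2 := by
        intro i
        have h1 : moreau r (f i) y ≤ ((c i + r / 2 * ‖x0 i - y‖ ^ 2 : ℝ) : EReal) := by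
          have h2 : moreau r (f i) y ≤ f i (x0 i)
              + (((r / 2) * ‖x0 i - y‖ ^ 2 : ℝ) : EReal) := iInf_le _ (x0 i)
          rwa [← EReal.coe_toReal (hx0 i) (hne_bot i (x0 i)), ← EReal.coe_add] at h2
        have := EReal.toReal_le_toReal h1 (hpb i r (hr i) y) (EReal.coe_ne_top _)
        rwa [EReal.toReal_coe] at this
      have hsumle : ∑ i, lam i * (moreau r (f i) y).toReal
          ≤ ∑ i, lam i * (c i + r / 2 * ‖x0 i - y‖ ^ 2) :=
        Finset.sum_le_sum fun i _ => mul_le_mul_of_nonneg_left (henv i) (hnn i)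
      have hvar := var_identity lam hsum x0 y
      rw [← hxb] at hvar
      have hexp : ∑ i, lam i * (c i + r / 2 * ‖x0 i - y‖ ^ 2)
          = ∑ i, lam i * c i + r / 2 * ∑ i, lam i * ‖x0 i - y‖ ^ 2 := by
        rw [Finset.mul_sum]
        rw [← Finset.sum_add_distrib]
        exact Finset.sum_congr rfl fun i _ => by ring
      have hreal : B ≤ -(∑ i, lam i * (moreau r (f i) y).toReal)
          + (r + δ lam) / 2 * ‖y - xb‖ ^ 2 := by
        have hq : 0 ≤ δ lam / 2 * ‖y - xb‖ ^ 2 :=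
          mul_nonneg (by linarith) (sq_nonneg _)
        rw [hexp, hvar] at hsumle
        rw [hB]
        nlinarith [hsumle, hq]
      calc (B : EReal) ≤ ((-(∑ i, lam i * (moreau r (f i) y).toReal)
            + (r + δ lam) / 2 * ‖y - xb‖ ^ 2 : ℝ) : EReal) := EReal.coe_le_coe_iff.mpr hreal
        _ = g y + ((((r + δ lam) / 2) * ‖y - xb‖ ^ 2 : ℝ) : EReal) := by
            rw [hg, ← EReal.coe_add]
        _ ≤ _ := le_refl _
    intro hbot
    rw [hbot] at hlow
    exact (EReal.coe_ne_bot B) (le_bot_iff.mp hlow)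
end

section
/- Let f : ℝ^n → ℝ ∪ {∞} be proper and lsc such that f + (r/2)|·|² is convex. Then PA_r(·, e_i) = f, i.e., -e_r(-e_r f)(x) = f(x) for all x. -/
open scoped InnerProductSpace


open scoped InnerProductSpace

section ERealHelpers

variable {ι : Sort*}

lemma ereal_neg_add_coe (a : EReal) (c : ℝ) : -(a + (c : EReal)) = -a + ((-c : ℝ) : EReal) := by
  induction a using EReal.rec with
  | bot => simp
  | coe a => norm_cast; ring
  | top => simp

lemma ereal_neg_iInf (g : ι → EReal) : -(⨅ i, g i) = ⨆ i, -(g i) := by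
  apply le_antisymm
  · rw [EReal.neg_le]
    exact le_iInf fun i => EReal.neg_le.mp (le_iSup (fun i => -(g i)) i)
  · exact iSup_le fun i => EReal.neg_le.mp (by rw [neg_neg]; exact iInf_le _ i)

lemma ereal_sub_le_sub_right {a b : EReal} (h : a ≤ b) (c : ℝ) :
    a - (c : EReal) ≤ b - (c : EReal) := add_le_add h le_rfl

lemma ereal_iInf_add (g : ι → EReal) (c : ℝ) :
    (⨅ i, g i) + (c : EReal) = ⨅ i, (g i + (c : EReal)) := by
  apply le_antisymm
  · exact le_iInf fun i => add_le_add (iInf_le g i) le_rfl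
  · have h1 : ∀ i, (⨅ i, g i + (c : EReal)) - (c : EReal) ≤ g i := by
      intro i
      have := ereal_sub_le_sub_right (iInf_le (fun i => g i + (c : EReal)) i) c
      rwa [EReal.add_sub_cancel_right] at this
    have h2 : (⨅ i, g i + (c : EReal)) - (c : EReal) ≤ ⨅ i, g i := le_iInf h1
    have := add_le_add h2 (le_refl (c : EReal))
    rwa [EReal.sub_add_cancel] at this

lemma ereal_iSup_add (g : ι → EReal) (c : ℝ) :
    (⨆ i, g i) + (c : EReal) = ⨆ i, (g i + (c : EReal)) := by
  apply le_antisymm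
  · have h1 : ∀ i, g i ≤ (⨆ i, g i + (c : EReal)) - (c : EReal) := by
      intro i
      have := ereal_sub_le_sub_right (le_iSup (fun i => g i + (c : EReal)) i) c
      rwa [EReal.add_sub_cancel_right] at this
    have h2 : (⨆ i, g i) ≤ (⨆ i, g i + (c : EReal)) - (c : EReal) := iSup_le h1
    have := add_le_add h2 (le_refl (c : EReal))
    rwa [EReal.sub_add_cancel] at this
  · exact iSup_le fun i => add_le_add (le_iSup g i) le_rfl

end ERealHelpers

section Lemmas

lemma lsc_add_cont {α : Type*} [TopologicalSpace α] {f : α → EReal} (hf : LowerSemicontinuous f)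
    {g : α → ℝ} (hg : Continuous g) :
    LowerSemicontinuous (fun z => f z + ((g z : ℝ) : EReal)) := by
  intro x t ht
  obtain ⟨T, hT1, hT2⟩ := EReal.exists_between_coe_real ht
  have hfx : ((T - g x : ℝ) : EReal) < f x := by
    by_contra hc
    push_neg at hc
    have h1 : f x + ((g x : ℝ) : EReal) ≤ ((T - g x : ℝ) : EReal) + ((g x : ℝ) : EReal) :=
      add_le_add hc le_rfl
    rw [← EReal.coe_add, show T - g x + g x = T by ring] at h1
    exact absurd hT2 (not_lt.2 h1)
  obtain ⟨c', hc1, hc2⟩ := EReal.exists_between_coe_real hfx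
  have hev1 : ∀ᶠ z in nhds x, (c' : EReal) < f z := hf x _ hc2
  have hev2 : ∀ᶠ z in nhds x, T - c' < g z := by
    have hx' : x ∈ g ⁻¹' Set.Ioi (T - c') := by
      have := EReal.coe_lt_coe_iff.1 hc1
      simp only [Set.mem_preimage, Set.mem_Ioi]
      linarith
    exact (isOpen_Ioi.preimage hg).mem_nhds hx'
  filter_upwards [hev1, hev2] with z h1 h2
  have h3 : ((c' + g z : ℝ) : EReal) ≤ f z + ((g z : ℝ) : EReal) := by
    rw [EReal.coe_add]; exact add_le_add h1.le le_rfl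
  have h4 : (T : EReal) < ((c' + g z : ℝ) : EReal) := EReal.coe_lt_coe_iff.2 (by linarith)
  exact lt_of_lt_of_le (lt_trans hT1 h4) h3

open scoped InnerProductSpace

lemma exists_sep {n : ℕ} (h : EuclideanSpace ℝ (Fin n) → EReal)
    (hbot : ∀ x, h x ≠ ⊥) (hprop : ∃ x, h x ≠ ⊤) (hlsc : LowerSemicontinuous h)
    (hconv : ∀ x y : EuclideanSpace ℝ (Fin n), ∀ a b : ℝ, 0 ≤ a → 0 ≤ b → a + b = 1 →
      h (a • x + b • y) ≤ (a : EReal) * h x + (b : EReal) * h y)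
    (x : EuclideanSpace ℝ (Fin n)) (t : ℝ) (ht : (t : EReal) < h x) :
    ∃ (a : EuclideanSpace ℝ (Fin n)) (b u : ℝ), 0 ≤ b ∧ ⟪a, x⟫_ℝ + b * t < u ∧
      ∀ z (μ : ℝ), h z ≤ (μ : EReal) → u < ⟪a, z⟫_ℝ + b * μ := by
  classical
  set S : Set ((EuclideanSpace ℝ (Fin n)) × ℝ) := {q | h q.1 ≤ (q.2 : EReal)} with hS
  have hSclosed : IsClosed S := by
    rw [← isOpen_compl_iff, isOpen_iff_mem_nhds]
    rintro ⟨z, μ⟩ hq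
    simp only [hS, Set.mem_compl_iff, Set.mem_setOf_eq, not_le] at hq
    obtain ⟨c, hc1, hc2⟩ := EReal.exists_between_coe_real hq
    have h1 : {w | (c : EReal) < h w} ∈ nhds z := hlsc z _ hc2
    have h2 : Set.Iio c ∈ nhds μ := Iio_mem_nhds (EReal.coe_lt_coe_iff.1 hc1)
    apply Filter.mem_of_superset (prod_mem_nhds h1 h2)
    rintro ⟨w, ν⟩ ⟨hw, hν⟩
    simp only [hS, Set.mem_compl_iff, Set.mem_setOf_eq, not_le]
    exact lt_trans (EReal.coe_lt_coe_iff.2 hν) hw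
  have hSconv : Convex ℝ S := by
    rintro ⟨z₁, μ₁⟩ hq1 ⟨z₂, μ₂⟩ hq2 a b ha hb hab
    simp only [hS, Set.mem_setOf_eq] at hq1 hq2 ⊢
    show h (a • z₁ + b • z₂) ≤ ((a * μ₁ + b * μ₂ : ℝ) : EReal)
    calc h (a • z₁ + b • z₂) ≤ (a : EReal) * h z₁ + (b : EReal) * h z₂ :=
          hconv z₁ z₂ a b ha hb hab
      _ ≤ (a : EReal) * (μ₁ : EReal) + (b : EReal) * (μ₂ : EReal) :=
          add_le_add (mul_le_mul_of_nonneg_left hq1 (EReal.coe_nonneg.2 ha))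
            (mul_le_mul_of_nonneg_left hq2 (EReal.coe_nonneg.2 hb))
      _ = ((a * μ₁ + b * μ₂ : ℝ) : EReal) := by
          rw [← EReal.coe_mul, ← EReal.coe_mul, ← EReal.coe_add]
  have hxt : (x, t) ∉ S := by
    simp only [hS, Set.mem_setOf_eq, not_le]; exact ht
  obtain ⟨φ, u, hu1, hu2⟩ := geometric_hahn_banach_point_closed hSconv hSclosed hxt
  set a := (InnerProductSpace.toDual ℝ (EuclideanSpace ℝ (Fin n))).symm
    (φ.comp (ContinuousLinearMap.inl ℝ (EuclideanSpace ℝ (Fin n)) ℝ)) with ha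
  set b := φ (0, 1) with hbdef
  have hφ : ∀ z (μ : ℝ), φ (z, μ) = ⟪a, z⟫_ℝ + b * μ := by
    intro z μ
    have h1 : (z, μ) = ((z, 0) : (EuclideanSpace ℝ (Fin n)) × ℝ) + μ • ((0, 1) :
        (EuclideanSpace ℝ (Fin n)) × ℝ) := by
      simp [Prod.ext_iff]
    rw [h1, map_add, map_smul]
    have h2 : ⟪a, z⟫_ℝ = φ (z, 0) := by
      rw [ha]
      rw [InnerProductSpace.toDual_symm_apply]
      rfl
    rw [h2, smul_eq_mul, mul_comm]
  obtain ⟨z₀, hz₀top⟩ := hprop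
  have hz₀ : h z₀ = ((h z₀).toReal : EReal) := (EReal.coe_toReal hz₀top (hbot z₀)).symm
  set c₀ := (h z₀).toReal
  have hb0 : 0 ≤ b := by
    by_contra hbneg
    push_neg at hbneg
    set k := max 0 ((u - ⟪a, z₀⟫_ℝ - c₀ * b) / b) with hk
    have hk0 : 0 ≤ k := le_max_left _ _
    have hmem : (z₀, c₀ + k) ∈ S := by
      simp only [hS, Set.mem_setOf_eq]
      rw [hz₀]
      exact EReal.coe_le_coe_iff.2 (by linarith)
    have h3 := hu2 _ hmem
    rw [hφ] at h3
    have h4 : (u - ⟪a, z₀⟫_ℝ - c₀ * b) / b ≤ k := le_max_right _ _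
    have h5 : k * b ≤ u - ⟪a, z₀⟫_ℝ - c₀ * b := (div_le_iff_of_neg hbneg).1 h4
    nlinarith
  refine ⟨a, b, u, hb0, ?_, ?_⟩
  · have := hu1; rw [hφ] at this; exact this
  · intro z μ hzμ
    have := hu2 (z, μ) hzμ
    rwa [hφ] at this

end Lemmas

section Lemmas2
open scoped InnerProductSpace

lemma exists_affine_minorant {n : ℕ} (h : EuclideanSpace ℝ (Fin n) → EReal)
    (hbot : ∀ x, h x ≠ ⊥) (hprop : ∃ x, h x ≠ ⊤) (hlsc : LowerSemicontinuous h)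
    (hconv : ∀ x y : EuclideanSpace ℝ (Fin n), ∀ a b : ℝ, 0 ≤ a → 0 ≤ b → a + b = 1 →
      h (a • x + b • y) ≤ (a : EReal) * h x + (b : EReal) * h y) :
    ∃ (p₀ : EuclideanSpace ℝ (Fin n)) (β₀ : ℝ), ∀ z,
      ((⟪p₀, z⟫_ℝ + β₀ : ℝ) : EReal) ≤ h z := by
  obtain ⟨z₀, hz₀top⟩ := hprop
  have hz₀ : h z₀ = ((h z₀).toReal : EReal) := (EReal.coe_toReal hz₀top (hbot z₀)).symm
  set c₀ := (h z₀).toReal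
  have ht : ((c₀ - 1 : ℝ) : EReal) < h z₀ := by
    rw [hz₀]; exact EReal.coe_lt_coe_iff.2 (by linarith)
  obtain ⟨a, b, u, hb0, h1, h2⟩ := exists_sep h hbot ⟨z₀, hz₀top⟩ hlsc hconv z₀ (c₀ - 1) ht
  have hbpos : 0 < b := by
    rcases hb0.lt_or_eq with hlt | heq
    · exact hlt
    · exfalso
      have h3 := h2 z₀ c₀ (le_of_eq hz₀)
      rw [← heq] at h1 h3
      linarith
  refine ⟨-(b⁻¹) • a, u / b, ?_⟩
  intro z
  rcases eq_or_ne (h z) ⊤ with htop | hne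
  · rw [htop]; exact le_top
  · have hz : h z = ((h z).toReal : EReal) := (EReal.coe_toReal hne (hbot z)).symm
    set c := (h z).toReal
    have h3 := h2 z c (le_of_eq hz)
    rw [hz]
    apply EReal.coe_le_coe_iff.2
    rw [real_inner_smul_left]
    have h4 : (u - ⟪a, z⟫_ℝ) / b < c := by
      rw [div_lt_iff₀ hbpos]; nlinarith
    have h5 : -b⁻¹ * ⟪a, z⟫_ℝ + u / b = (u - ⟪a, z⟫_ℝ) / b := by
      field_simp
      ring
    linarith [h5, h4]

lemma exists_lt_minorant {n : ℕ} (h : EuclideanSpace ℝ (Fin n) → EReal)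
    (hbot : ∀ x, h x ≠ ⊥) (hprop : ∃ x, h x ≠ ⊤) (hlsc : LowerSemicontinuous h)
    (hconv : ∀ x y : EuclideanSpace ℝ (Fin n), ∀ a b : ℝ, 0 ≤ a → 0 ≤ b → a + b = 1 →
      h (a • x + b • y) ≤ (a : EReal) * h x + (b : EReal) * h y)
    (x : EuclideanSpace ℝ (Fin n)) (M : ℝ) (hM : (M : EReal) < h x) :
    ∃ p : EuclideanSpace ℝ (Fin n), ∀ z,
      (M : EReal) < h z + ((⟪p, x - z⟫_ℝ : ℝ) : EReal) := by
  obtain ⟨a, b, u, hb0, hxM, hsep⟩ := exists_sep h hbot hprop hlsc hconv x M hM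
  rcases hb0.eq_or_lt with hb0' | hbpos
  · -- b = 0
    obtain ⟨p₀, β₀, hmin⟩ := exists_affine_minorant h hbot hprop hlsc hconv
    have hgap : 0 < u - ⟪a, x⟫_ℝ := by rw [← hb0'] at hxM; linarith
    set s := max 0 ((M + 1 - ⟪p₀, x⟫_ℝ - β₀) / (u - ⟪a, x⟫_ℝ)) with hs
    have hs0 : 0 ≤ s := le_max_left _ _
    have hs1 : M + 1 - ⟪p₀, x⟫_ℝ - β₀ ≤ s * (u - ⟪a, x⟫_ℝ) := by
      rw [← div_le_iff₀ hgap]; exact le_max_right _ _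
    refine ⟨p₀ - s • a, ?_⟩
    intro z
    rcases eq_or_ne (h z) ⊤ with htop | hne
    · rw [htop, EReal.top_add_coe]; exact EReal.coe_lt_top M
    · have hz : h z = ((h z).toReal : EReal) := (EReal.coe_toReal hne (hbot z)).symm
      set c := (h z).toReal
      have h1 : ⟪p₀, z⟫_ℝ + β₀ ≤ c := by
        have := hmin z; rw [hz] at this; exact EReal.coe_le_coe_iff.1 this
      have h2 : u < ⟪a, z⟫_ℝ := by
        have := hsep z c (le_of_eq hz); rw [← hb0'] at this; linarith
      rw [hz, ← EReal.coe_add]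
      apply EReal.coe_lt_coe_iff.2
      have e : ⟪p₀ - s • a, x - z⟫_ℝ =
          (⟪p₀, x⟫_ℝ - ⟪p₀, z⟫_ℝ) - s * (⟪a, x⟫_ℝ - ⟪a, z⟫_ℝ) := by
        rw [inner_sub_left, inner_sub_right, inner_sub_right, real_inner_smul_left,
          real_inner_smul_left]
        ring
      rw [e]
      nlinarith [mul_nonneg hs0 (sub_nonneg.2 h2.le)]
  · -- b > 0
    refine ⟨-(b⁻¹) • a, ?_⟩
    intro z
    rcases eq_or_ne (h z) ⊤ with htop | hne
    · rw [htop, EReal.top_add_coe]; exact EReal.coe_lt_top M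
    · have hz : h z = ((h z).toReal : EReal) := (EReal.coe_toReal hne (hbot z)).symm
      set c := (h z).toReal
      have h2 : u < ⟪a, z⟫_ℝ + b * c := hsep z c (le_of_eq hz)
      rw [hz, ← EReal.coe_add]
      apply EReal.coe_lt_coe_iff.2
      have e : ⟪-(b⁻¹ : ℝ) • a, x - z⟫_ℝ = b⁻¹ * (⟪a, z⟫_ℝ - ⟪a, x⟫_ℝ) := by
        rw [real_inner_smul_left, inner_sub_right]; ring
      rw [e]
      have key : b * M < b * c + (⟪a, z⟫_ℝ - ⟪a, x⟫_ℝ) := by linarith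
      have hbi : (0 : ℝ) < b⁻¹ := inv_pos.2 hbpos
      calc M = b⁻¹ * (b * M) := by rw [← mul_assoc, inv_mul_cancel₀ hbpos.ne', one_mul]
        _ < b⁻¹ * (b * c + (⟪a, z⟫_ℝ - ⟪a, x⟫_ℝ)) := by
            exact mul_lt_mul_of_pos_left key hbi
        _ = c + b⁻¹ * (⟪a, z⟫_ℝ - ⟪a, x⟫_ℝ) := by
            rw [mul_add, ← mul_assoc, inv_mul_cancel₀ hbpos.ne', one_mul]

end Lemmas2

section Biconj
open scoped InnerProductSpace

lemma biconjugate {n : ℕ} (h : EuclideanSpace ℝ (Fin n) → EReal)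
    (hbot : ∀ x, h x ≠ ⊥) (hprop : ∃ x, h x ≠ ⊤) (hlsc : LowerSemicontinuous h)
    (hconv : ∀ x y : EuclideanSpace ℝ (Fin n), ∀ a b : ℝ, 0 ≤ a → 0 ≤ b → a + b = 1 →
      h (a • x + b • y) ≤ (a : EReal) * h x + (b : EReal) * h y)
    (x : EuclideanSpace ℝ (Fin n)) :
    (⨆ p : EuclideanSpace ℝ (Fin n), ⨅ z, h z + ((⟪p, x - z⟫_ℝ : ℝ) : EReal)) = h x := by
  apply le_antisymm
  · apply iSup_le
    intro p
    have h1 : (⨅ z, h z + ((⟪p, x - z⟫_ℝ : ℝ) : EReal)) ≤ h x + ((⟪p, x - x⟫_ℝ : ℝ) : EReal) :=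
      iInf_le _ x
    rwa [sub_self, inner_zero_right, EReal.coe_zero, add_zero] at h1
  · by_contra hc
    push_neg at hc
    obtain ⟨M, hM1, hM2⟩ := EReal.exists_between_coe_real hc
    obtain ⟨p, hp⟩ := exists_lt_minorant h hbot hprop hlsc hconv x M hM2
    have h1 : (M : EReal) ≤ ⨅ z, h z + ((⟪p, x - z⟫_ℝ : ℝ) : EReal) :=
      le_iInf fun z => (hp z).le
    exact absurd (h1.trans (le_iSup (fun p => ⨅ z, h z + ((⟪p, x - z⟫_ℝ : ℝ) : EReal)) p))
      (not_le.2 hM1)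

end Biconj

lemma ereal_add_coe_ne_bot {a : EReal} (ha : a ≠ ⊥) (c : ℝ) : a + (c : EReal) ≠ ⊥ := by
  induction a using EReal.rec with
  | bot => exact absurd rfl ha
  | coe a => rw [← EReal.coe_add]; exact EReal.coe_ne_bot _
  | top => rw [EReal.top_add_coe]; exact top_ne_bot

lemma ereal_add_coe_ne_top {a : EReal} (ha : a ≠ ⊤) (c : ℝ) : a + (c : EReal) ≠ ⊤ := by
  induction a using EReal.rec with
  | bot => rw [EReal.bot_add]; exact bot_ne_top
  | coe a => rw [← EReal.coe_add]; exact EReal.coe_ne_top _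
  | top => exact absurd rfl ha




theorem double_envelope_involution {n : ℕ} (f : EuclideanSpace ℝ (Fin n) → EReal)
    (hne_bot : ∀ x, f x ≠ ⊥) (hproper : ∃ x, f x ≠ ⊤)
    (hlsc : LowerSemicontinuous f)
    (r : ℝ) (hr : 0 < r)
    (hconv : ∀ x y : EuclideanSpace ℝ (Fin n), ∀ a b : ℝ, 0 ≤ a → 0 ≤ b → a + b = 1 →
      f (a • x + b • y) + (((r / 2) * ‖a • x + b • y‖ ^ 2 : ℝ) : EReal) ≤
        (a : EReal) * (f x + (((r / 2) * ‖x‖ ^ 2 : ℝ) : EReal)) +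
        (b : EReal) * (f y + (((r / 2) * ‖y‖ ^ 2 : ℝ) : EReal))) :
    ∀ x, -(moreau r (fun y => -(moreau r f y)) x) = f x := by
  classical
  obtain ⟨x₀, hx₀⟩ := hproper
  set h : EuclideanSpace ℝ (Fin n) → EReal :=
    fun z => f z + (((r / 2) * ‖z‖ ^ 2 : ℝ) : EReal) with hh
  have hbot_h : ∀ z, h z ≠ ⊥ := fun z => ereal_add_coe_ne_bot (hne_bot z) _
  have hprop_h : ∃ z, h z ≠ ⊤ := ⟨x₀, ereal_add_coe_ne_top hx₀ _⟩
  have hlsc_h : LowerSemicontinuous h :=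
    lsc_add_cont hlsc (continuous_const.mul (continuous_norm.pow 2))
  have hconv_h : ∀ x y : EuclideanSpace ℝ (Fin n), ∀ a b : ℝ, 0 ≤ a → 0 ≤ b → a + b = 1 →
      h (a • x + b • y) ≤ (a : EReal) * h x + (b : EReal) * h y := by
    intro x y a b ha hb hab
    simp only [hh]
    exact hconv x y a b ha hb hab
  intro x
  have hexp : -(moreau r (fun y => -(moreau r f y)) x) =
      ⨆ y, -((-(moreau r f y)) + (((r / 2) * ‖y - x‖ ^ 2 : ℝ) : EReal)) := by
    have e : moreau r (fun y => -(moreau r f y)) x =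
        ⨅ y, (-(moreau r f y)) + (((r / 2) * ‖y - x‖ ^ 2 : ℝ) : EReal) := rfl
    rw [e, ereal_neg_iInf]
  have step1 : ∀ y : EuclideanSpace ℝ (Fin n),
      -((-(moreau r f y)) + (((r / 2) * ‖y - x‖ ^ 2 : ℝ) : EReal)) =
      (⨅ z, h z + ((⟪r • y, x - z⟫_ℝ : ℝ) : EReal)) +
        ((-((r / 2) * ‖x‖ ^ 2) : ℝ) : EReal) := by
    intro y
    rw [ereal_neg_add_coe, neg_neg]
    have e : moreau r f y = ⨅ z, f z + (((r / 2) * ‖z - y‖ ^ 2 : ℝ) : EReal) := rfl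
    rw [e, ereal_iInf_add, ereal_iInf_add]
    apply iInf_congr
    intro z
    have key : (r / 2) * ‖z - y‖ ^ 2 + (-((r / 2) * ‖y - x‖ ^ 2)) =
        (r / 2) * ‖z‖ ^ 2 + (⟪r • y, x - z⟫_ℝ + (-((r / 2) * ‖x‖ ^ 2))) := by
      rw [norm_sub_sq_real, norm_sub_sq_real, real_inner_smul_left, inner_sub_right,
        real_inner_comm z y]
      ring
    calc (f z + (((r / 2) * ‖z - y‖ ^ 2 : ℝ) : EReal)) + ((-((r / 2) * ‖y - x‖ ^ 2) : ℝ) : EReal)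
        = f z + (((r / 2) * ‖z - y‖ ^ 2 + (-((r / 2) * ‖y - x‖ ^ 2)) : ℝ) : EReal) := by
          rw [add_assoc, ← EReal.coe_add]
      _ = f z + (((r / 2) * ‖z‖ ^ 2 + (⟪r • y, x - z⟫_ℝ + (-((r / 2) * ‖x‖ ^ 2))) : ℝ) : EReal) := by
          rw [key]
      _ = (h z + ((⟪r • y, x - z⟫_ℝ : ℝ) : EReal)) + ((-((r / 2) * ‖x‖ ^ 2) : ℝ) : EReal) := by
          simp only [hh]
          rw [EReal.coe_add, EReal.coe_add, ← add_assoc, ← add_assoc]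
  have hsurj : Function.Surjective (fun y : EuclideanSpace ℝ (Fin n) => r • y) :=
    fun p => ⟨r⁻¹ • p, smul_inv_smul₀ hr.ne' p⟩
  calc -(moreau r (fun y => -(moreau r f y)) x)
      = ⨆ y, -((-(moreau r f y)) + (((r / 2) * ‖y - x‖ ^ 2 : ℝ) : EReal)) := hexp
    _ = ⨆ y, ((⨅ z, h z + ((⟪r • y, x - z⟫_ℝ : ℝ) : EReal)) +
          ((-((r / 2) * ‖x‖ ^ 2) : ℝ) : EReal)) := iSup_congr step1
    _ = (⨆ y, ⨅ z, h z + ((⟪r • y, x - z⟫_ℝ : ℝ) : EReal)) +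
          ((-((r / 2) * ‖x‖ ^ 2) : ℝ) : EReal) := (ereal_iSup_add _ _).symm
    _ = (⨆ p, ⨅ z, h z + ((⟪p, x - z⟫_ℝ : ℝ) : EReal)) +
          ((-((r / 2) * ‖x‖ ^ 2) : ℝ) : EReal) := by
        rw [hsurj.iSup_comp (fun p => ⨅ z, h z + ((⟪p, x - z⟫_ℝ : ℝ) : EReal))]
    _ = h x + ((-((r / 2) * ‖x‖ ^ 2) : ℝ) : EReal) := by
        rw [biconjugate h hbot_h hprop_h hlsc_h hconv_h x]
    _ = f x := by
        simp only [hh]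
        rw [add_assoc, ← EReal.coe_add, add_neg_cancel, EReal.coe_zero, add_zero]
end

section
/- Let f₁,...,f_m be proper, lsc, prox-bounded with thresholds r_i, and r > max_i r_i. For any λ ∈ Λ with δ(λ) > 0, the function PA_{r,δ}(·,λ) + ((r+δ(λ))/2)|· - x̄|² is convex for every x̄ ∈ ℝ^n; in particular PA_{r,δ}(·,λ) is lower-C². -/
open scoped RealInnerProductSpace

lemma ereal_iInf_coe {α : Type*} [Nonempty α] (F : α → ℝ) (h : BddBelow (Set.range F)) :
    (⨅ y, ((F y : ℝ) : EReal)) = ((⨅ y, F y : ℝ) : EReal) := by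
  apply le_antisymm
  · by_contra hc
    push_neg at hc
    set a := ⨅ y, ((F y : ℝ) : EReal) with ha_def
    have hatop : a ≠ ⊤ := by
      obtain ⟨y⟩ := ‹Nonempty α›
      exact ne_top_of_le_ne_top (EReal.coe_ne_top _) (iInf_le _ y)
    have habot : a ≠ ⊥ := by
      intro h'
      rw [h'] at hc
      exact (EReal.bot_lt_coe _).not_gt hc
    have ha : a = ((a.toReal : ℝ) : EReal) := (EReal.coe_toReal hatop habot).symm
    have hL : ⨅ y, F y < a.toReal := by
      rw [ha] at hc; exact_mod_cast hc
    obtain ⟨y, hy⟩ := exists_lt_of_ciInf_lt hL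
    have h2 : a ≤ ((F y : ℝ) : EReal) := iInf_le _ y
    rw [ha] at h2
    exact absurd (by exact_mod_cast h2) (not_le.mpr hy)
  · exact le_iInf fun y => EReal.coe_le_coe_iff.mpr (ciInf_le h y)

lemma quad_bdd {n : ℕ} {s r : ℝ} (h : r < s) (p q : EuclideanSpace ℝ (Fin n)) :
    ∃ B : ℝ, ∀ y, B ≤ s / 2 * ‖y - p‖ ^ 2 - r / 2 * ‖q - y‖ ^ 2 := by
  set u := s • p - r • q with hu
  refine ⟨(s / 2 * ‖p‖ ^ 2 - r / 2 * ‖q‖ ^ 2) - ‖u‖ ^ 2 / (2 * (s - r)), fun y => ?_⟩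
  have key : s / 2 * ‖y - p‖ ^ 2 - r / 2 * ‖q - y‖ ^ 2
      = (s - r) / 2 * ‖y‖ ^ 2 - ⟪u, y⟫ + (s / 2 * ‖p‖ ^ 2 - r / 2 * ‖q‖ ^ 2) := by
    rw [norm_sub_sq_real, norm_sub_sq_real, hu, inner_sub_left, real_inner_smul_left,
      real_inner_smul_left, real_inner_comm y p]
    ring
  have hiy : ⟪u, y⟫ ≤ ‖u‖ * ‖y‖ := real_inner_le_norm u y
  have hdiv : ‖u‖ * ‖y‖ - (s - r) / 2 * ‖y‖ ^ 2 ≤ ‖u‖ ^ 2 / (2 * (s - r)) := by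
    rw [le_div_iff₀ (by linarith : (0:ℝ) < 2 * (s - r))]
    nlinarith [sq_nonneg ((s - r) * ‖y‖ - ‖u‖)]
  linarith [key ▸ le_refl (s / 2 * ‖y - p‖ ^ 2 - r / 2 * ‖q - y‖ ^ 2)]

lemma quad_affine {n : ℕ} (y xb x₁ x₂ : EuclideanSpace ℝ (Fin n)) {a b : ℝ} (hab : a + b = 1) :
    ‖y - (a • x₁ + b • x₂)‖ ^ 2 - ‖(a • x₁ + b • x₂) - xb‖ ^ 2
      = a * (‖y - x₁‖ ^ 2 - ‖x₁ - xb‖ ^ 2) + b * (‖y - x₂‖ ^ 2 - ‖x₂ - xb‖ ^ 2) := by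
  have hb' : b = 1 - a := by linarith
  subst hb'
  simp only [norm_sub_sq_real, inner_add_right, inner_add_left, real_inner_smul_right,
    real_inner_smul_left]
  ring

lemma convexOn_normsq {n : ℕ} :
    ConvexOn ℝ Set.univ (fun x : EuclideanSpace ℝ (Fin n) => ‖x‖ ^ 2) := by
  refine ⟨convex_univ, fun x _ y _ a b ha hb hab => ?_⟩
  have h1 : ‖a • x + b • y‖ ^ 2
      = a ^ 2 * ‖x‖ ^ 2 + 2 * (a * b) * ⟪x, y⟫ + b ^ 2 * ‖y‖ ^ 2 := by
    rw [norm_add_sq_real, real_inner_smul_left, real_inner_smul_right, norm_smul, norm_smul,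
      Real.norm_eq_abs, Real.norm_eq_abs, abs_of_nonneg ha, abs_of_nonneg hb]
    ring
  have h2 : ⟪x, y⟫ ≤ ‖x‖ * ‖y‖ := real_inner_le_norm x y
  simp only [smul_eq_mul]
  nlinarith [mul_nonneg (mul_nonneg ha hb) (sq_nonneg (‖x‖ - ‖y‖)),
    mul_le_mul_of_nonneg_left h2 (mul_nonneg ha hb)]

theorem ncProxAverage_shifted_quad_convex {n m : ℕ}
    (f : Fin m → EuclideanSpace ℝ (Fin n) → EReal)
    (hne_bot : ∀ i x, f i x ≠ ⊥) (hproper : ∀ i, ∃ x, f i x ≠ ⊤)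
    (hlsc : ∀ i, LowerSemicontinuous (f i))
    (rth : Fin m → ℝ)
    (hpb : ∀ i, ∀ s : ℝ, rth i < s → ∀ x, moreau s (f i) x ≠ ⊥)
    (r : ℝ) (hr : ∀ i, rth i < r)
    (δ : (Fin m → ℝ) → ℝ)
    (hδcont : ContinuousOn δ (simplex m))
    (hδnn : ∀ lam ∈ simplex m, 0 ≤ δ lam)
    (hδ0 : ∀ lam ∈ simplex m, (δ lam = 0 ↔ ∃ i, lam = Pi.single i 1))
    (lam : Fin m → ℝ) (hlam : lam ∈ simplex m) (hdpos : 0 < δ lam) :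
    (∀ xb : EuclideanSpace ℝ (Fin n),
      ConvexOn ℝ Set.univ (fun x : EuclideanSpace ℝ (Fin n) =>
        (-(moreau (r + δ lam)
            (fun y => (((-(∑ i, lam i * (moreau r (f i) y).toReal)) : ℝ) : EReal)) x).toReal)
          + ((r + δ lam) / 2) * ‖x - xb‖ ^ 2) ) ∧
    (∃ c : ℝ, 0 < c ∧ ConvexOn ℝ Set.univ (fun x : EuclideanSpace ℝ (Fin n) =>
        (-(moreau (r + δ lam)
            (fun y => (((-(∑ i, lam i * (moreau r (f i) y).toReal)) : ℝ) : EReal)) x).toReal)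
          + c * ‖x‖ ^ 2)) := by
  set s := r + δ lam with hs_def
  have hrs : r < s := by simp [hs_def]; linarith
  set G : EuclideanSpace ℝ (Fin n) → ℝ :=
    fun y => -(∑ i, lam i * (moreau r (f i) y).toReal) with hG_def
  choose z hz using hproper
  -- bound on each envelope
  have hCbound : ∀ i y, (moreau r (f i) y).toReal
      ≤ (f i (z i)).toReal + r / 2 * ‖z i - y‖ ^ 2 := by
    intro i y
    have hbot : moreau r (f i) y ≠ ⊥ := hpb i r (hr i) y
    have hle : moreau r (f i) y ≤ f i (z i) + (((r / 2) * ‖z i - y‖ ^ 2 : ℝ) : EReal) :=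
      iInf_le _ (z i)
    have hfz : f i (z i) = (((f i (z i)).toReal : ℝ) : EReal) :=
      (EReal.coe_toReal (hz i) (hne_bot i (z i))).symm
    rw [hfz, ← EReal.coe_add] at hle
    have := EReal.toReal_le_toReal hle hbot (EReal.coe_ne_top _)
    rwa [EReal.toReal_coe] at this
  -- per-index quadratic bounds
  choose B hB using fun (x : EuclideanSpace ℝ (Fin n)) (i : Fin m) => quad_bdd hrs x (z i)
  -- bounded below
  have hbdd : ∀ x, BddBelow (Set.range fun y => G y + s / 2 * ‖y - x‖ ^ 2) := by
    intro x
    refine ⟨∑ i, lam i * (-(f i (z i)).toReal + B x i), ?_⟩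
    rintro _ ⟨y, rfl⟩
    show ∑ i, lam i * (-(f i (z i)).toReal + B x i) ≤ G y + s / 2 * ‖y - x‖ ^ 2
    have expand : G y + s / 2 * ‖y - x‖ ^ 2
        = ∑ i, lam i * (-(moreau r (f i) y).toReal + s / 2 * ‖y - x‖ ^ 2) := by
      rw [hG_def]
      simp only [mul_add, mul_neg, Finset.sum_add_distrib, Finset.sum_neg_distrib,
        ← Finset.sum_mul, hlam.2, one_mul]
    rw [expand]
    refine Finset.sum_le_sum fun i _ => mul_le_mul_of_nonneg_left ?_ (hlam.1 i)
    have h1 := hCbound i y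
    have h2 := hB x i y
    linarith
  -- Moreau envelope of the coerced function is the real infimum
  have hmor : ∀ x, moreau s (fun y => ((G y : ℝ) : EReal)) x
      = ((⨅ y, G y + s / 2 * ‖y - x‖ ^ 2 : ℝ) : EReal) := by
    intro x
    have : moreau s (fun y => ((G y : ℝ) : EReal)) x
        = ⨅ y, (((G y + s / 2 * ‖y - x‖ ^ 2 : ℝ)) : EReal) := by
      simp only [moreau, ← EReal.coe_add]
    rw [this, ereal_iInf_coe _ (hbdd x)]
  have htoReal : ∀ x, (moreau s (fun y => ((G y : ℝ) : EReal)) x).toReal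
      = ⨅ y, G y + s / 2 * ‖y - x‖ ^ 2 := by
    intro x; rw [hmor x]; exact EReal.toReal_coe _
  have H1 : ∀ xb : EuclideanSpace ℝ (Fin n),
      ConvexOn ℝ Set.univ (fun x : EuclideanSpace ℝ (Fin n) =>
        -(moreau s (fun y => ((G y : ℝ) : EReal)) x).toReal + s / 2 * ‖x - xb‖ ^ 2) := by
    intro xb
    refine ⟨convex_univ, fun x₁ _ x₂ _ a b ha hb hab => ?_⟩
    simp only [htoReal, smul_eq_mul]
    set zz := a • x₁ + b • x₂ with hzz
    have main : a * (⨅ y, G y + s / 2 * ‖y - x₁‖ ^ 2)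
        + b * (⨅ y, G y + s / 2 * ‖y - x₂‖ ^ 2)
        - s / 2 * (a * ‖x₁ - xb‖ ^ 2 + b * ‖x₂ - xb‖ ^ 2) + s / 2 * ‖zz - xb‖ ^ 2
        ≤ ⨅ y, G y + s / 2 * ‖y - zz‖ ^ 2 := by
      refine le_ciInf fun y => ?_
      have c₁ : (⨅ y, G y + s / 2 * ‖y - x₁‖ ^ 2) ≤ G y + s / 2 * ‖y - x₁‖ ^ 2 :=
        ciInf_le (hbdd x₁) y
      have c₂ : (⨅ y, G y + s / 2 * ‖y - x₂‖ ^ 2) ≤ G y + s / 2 * ‖y - x₂‖ ^ 2 :=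
        ciInf_le (hbdd x₂) y
      have key := quad_affine y xb x₁ x₂ hab
      have E : G y + s / 2 * ‖y - zz‖ ^ 2 - s / 2 * ‖zz - xb‖ ^ 2
          = a * (G y + s / 2 * ‖y - x₁‖ ^ 2 - s / 2 * ‖x₁ - xb‖ ^ 2)
            + b * (G y + s / 2 * ‖y - x₂‖ ^ 2 - s / 2 * ‖x₂ - xb‖ ^ 2) := by
        rw [hzz]
        linear_combination (s / 2) * key + G y * hab.symm
      nlinarith [mul_le_mul_of_nonneg_left c₁ ha, mul_le_mul_of_nonneg_left c₂ hb]
    linarith [main]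
  refine ⟨H1, ?_⟩
  refine ⟨max (s / 2) 1, lt_of_lt_of_le one_pos (le_max_right _ _), ?_⟩
  set c := max (s / 2) 1 with hc_def
  have hcs : s / 2 ≤ c := le_max_left _ _
  have hsplit : (fun x : EuclideanSpace ℝ (Fin n) =>
      -(moreau s (fun y => ((G y : ℝ) : EReal)) x).toReal + c * ‖x‖ ^ 2)
      = (fun x => (-(moreau s (fun y => ((G y : ℝ) : EReal)) x).toReal + s / 2 * ‖x - 0‖ ^ 2)
          + (c - s / 2) * ‖x‖ ^ 2) := by
    funext x
    rw [sub_zero]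
    ring
  rw [hsplit]
  have h2 : ConvexOn ℝ Set.univ
      (fun x : EuclideanSpace ℝ (Fin n) => (c - s / 2) * ‖x‖ ^ 2) := by
    simpa [smul_eq_mul] using convexOn_normsq.smul (by linarith : (0:ℝ) ≤ c - s / 2)
  exact (H1 0).add h2
end

section
/- Let f : ℝ^n → ℝ ∪ {∞} be proper, lsc, prox-bounded, and suppose r exceeds the prox-threshold and P_r f is single-valued and Lipschitz continuous. Then e_r f is differentiable with ∇e_r f(x) = r(x - P_r f(x)), and ∇e_r f is Lipschitz continuous. -/
def proxSet {n : ℕ} (s : ℝ) (f : EuclideanSpace ℝ (Fin n) → EReal)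
    (x : EuclideanSpace ℝ (Fin n)) : Set (EuclideanSpace ℝ (Fin n)) :=
  {y | ∀ z, f y + (((s / 2) * ‖y - x‖ ^ 2 : ℝ) : EReal) ≤
        f z + (((s / 2) * ‖z - x‖ ^ 2 : ℝ) : EReal)}

theorem moreau_gradient {n : ℕ} (f : EuclideanSpace ℝ (Fin n) → EReal)
    (hne_bot : ∀ x, f x ≠ ⊥) (hproper : ∃ x, f x ≠ ⊤)
    (hlsc : LowerSemicontinuous f)
    (rbar : ℝ)
    (hpb : ∀ s : ℝ, rbar < s → ∀ x, moreau s f x ≠ ⊥)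
    (r : ℝ) (hr : rbar < r) (hrpos : 0 < r)
    (P : EuclideanSpace ℝ (Fin n) → EuclideanSpace ℝ (Fin n))
    (hP : ∀ x, proxSet r f x = {P x})
    (K : NNReal) (hPlip : LipschitzWith K P) :
    (∀ x, HasGradientAt (fun y => (moreau r f y).toReal) (r • (x - P x)) x) ∧
    (∃ K' : NNReal, LipschitzWith K' (fun x => r • (x - P x))) := by
  classical
  obtain ⟨x0, hx0⟩ := hproper
  have hPmem : ∀ x z, f (P x) + (((r / 2) * ‖P x - x‖ ^ 2 : ℝ) : EReal) ≤
      f z + (((r / 2) * ‖z - x‖ ^ 2 : ℝ) : EReal) := by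
    intro x
    have : P x ∈ proxSet r f x := by rw [hP x]; rfl
    exact this
  -- f (P x) is finite
  have hfPtop : ∀ x, f (P x) ≠ ⊤ := by
    intro x hT
    have h1 := hPmem x x0
    rw [hT, EReal.top_add_coe] at h1
    have h2 : f x0 + (((r / 2) * ‖x0 - x‖ ^ 2 : ℝ) : EReal) ≠ ⊤ :=
      (EReal.add_lt_top hx0 (EReal.coe_ne_top _)).ne
    exact h2 (top_le_iff.mp h1)
  set F : EuclideanSpace ℝ (Fin n) → ℝ := fun x => (f (P x)).toReal with hFdef
  have hF : ∀ x, f (P x) = ((F x : ℝ) : EReal) := fun x =>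
    (EReal.coe_toReal (hfPtop x) (hne_bot _)).symm
  -- the Moreau envelope value
  have hmor : ∀ x, moreau r f x = ((F x + (r / 2) * ‖P x - x‖ ^ 2 : ℝ) : EReal) := by
    intro x
    apply le_antisymm
    · calc moreau r f x ≤ f (P x) + (((r / 2) * ‖P x - x‖ ^ 2 : ℝ) : EReal) :=
            iInf_le _ (P x)
        _ = _ := by rw [hF x, ← EReal.coe_add]
    · apply le_iInf
      intro y
      calc ((F x + (r / 2) * ‖P x - x‖ ^ 2 : ℝ) : EReal)
          = f (P x) + (((r / 2) * ‖P x - x‖ ^ 2 : ℝ) : EReal) := by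
            rw [hF x, ← EReal.coe_add]
        _ ≤ _ := hPmem x y
  set E : EuclideanSpace ℝ (Fin n) → ℝ := fun x => (moreau r f x).toReal with hEdef
  have hE : ∀ x, E x = F x + (r / 2) * ‖P x - x‖ ^ 2 := by
    intro x; simp only [hEdef, hmor x, EReal.toReal_coe]
  -- upper bound
  have hub : ∀ x w, E w ≤ F x + (r / 2) * ‖P x - w‖ ^ 2 := by
    intro x w
    have h1 : moreau r f w ≤ f (P x) + (((r / 2) * ‖P x - w‖ ^ 2 : ℝ) : EReal) :=
      iInf_le _ (P x)
    rw [hmor w, hF x, ← EReal.coe_add, EReal.coe_le_coe_iff] at h1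
    rw [hE w]
    exact h1
  -- key inequality
  have key : ∀ x w, E w - E x - inner ℝ (r • (x - P x)) (w - x) ≤ (r / 2) * ‖w - x‖ ^ 2 := by
    intro x w
    have h1 := hub x w
    rw [hE x]
    have hip : inner ℝ (r • (x - P x)) (w - x) = r * inner ℝ (x - P x) (w - x) := by
      rw [real_inner_smul_left]
    have hexp : ‖P x - w‖ ^ 2 =
        ‖P x - x‖ ^ 2 + 2 * inner ℝ (x - P x) (w - x) + ‖w - x‖ ^ 2 := by
      have h2 : P x - w = (P x - x) - (w - x) := by abel
      rw [h2, norm_sub_sq_real (P x - x) (w - x)]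
      have : inner ℝ (x - P x) (w - x) = -(inner ℝ (P x - x) (w - x) : ℝ) := by
        rw [← inner_neg_left]; congr 1; abel
      rw [this]; ring
    rw [hip]
    nlinarith [h1, hexp]
  -- Lipschitz of the gradient
  have hrnn : (0 : ℝ) ≤ r := le_of_lt hrpos
  have hglip : LipschitzWith (⟨r, hrnn⟩ * (1 + K)) (fun x => r • (x - P x)) := by
    have h1 : LipschitzWith (1 + K) (fun x : EuclideanSpace ℝ (Fin n) => x - P x) :=
      LipschitzWith.id.sub hPlip
    apply LipschitzWith.of_dist_le_mul
    intro a b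
    have h2 := h1.dist_le_mul a b
    rw [dist_eq_norm, dist_eq_norm] at h2 ⊢
    rw [← smul_sub]
    have h3 : ‖r • ((a - P a) - (b - P b))‖ = r * ‖(a - P a) - (b - P b)‖ := by
      rw [norm_smul, Real.norm_eq_abs, abs_of_nonneg hrnn]
    rw [h3]
    push_cast
    calc r * ‖(a - P a) - (b - P b)‖ ≤ r * ((1 + K) * ‖a - b‖) :=
          mul_le_mul_of_nonneg_left h2 hrnn
      _ = r * (1 + K) * ‖a - b‖ := by ring
  refine ⟨?_, ⟨_, hglip⟩⟩
  intro x
  set g : EuclideanSpace ℝ (Fin n) → EuclideanSpace ℝ (Fin n) :=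
    fun x => r • (x - P x) with hgdef
  set L : ℝ := r * (1 + K) with hLdef
  have hLnn : (0 : ℝ) ≤ L := by positivity
  have hgd : ∀ w, ‖g w - g x‖ ≤ L * ‖w - x‖ := by
    intro w
    have h := hglip.dist_le_mul w x
    rw [dist_eq_norm, dist_eq_norm] at h
    have hc : ((⟨r, hrnn⟩ * (1 + K) : NNReal) : ℝ) = L := by
      rw [hLdef]; exact (NNReal.coe_mul ⟨r, hrnn⟩ (1 + K)).trans (by simp; exact Or.inl rfl)
    rwa [hc] at h
  -- two-sided bound
  have hbound : ∀ w, |E w - E x - inner ℝ (g x) (w - x)| ≤ (r / 2 + L) * ‖w - x‖ ^ 2 := by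
    intro w
    rw [abs_le]
    constructor
    · have h1 := key w x
      have h2 : inner ℝ (g w) (x - w) = -(inner ℝ (g w) (w - x) : ℝ) := by
        rw [← inner_neg_right]; congr 1; abel
      have h3 : -(L * ‖w - x‖ ^ 2) ≤ (inner ℝ (g w - g x) (w - x) : ℝ) := by
        have habs : |(inner ℝ (g w - g x) (w - x) : ℝ)| ≤ L * ‖w - x‖ ^ 2 := by
          calc |(inner ℝ (g w - g x) (w - x) : ℝ)| ≤ ‖g w - g x‖ * ‖w - x‖ :=
                abs_real_inner_le_norm _ _
            _ ≤ (L * ‖w - x‖) * ‖w - x‖ :=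
                mul_le_mul_of_nonneg_right (hgd w) (norm_nonneg _)
            _ = L * ‖w - x‖ ^ 2 := by ring
        linarith [neg_abs_le (inner ℝ (g w - g x) (w - x) : ℝ)]
      have h4 : (inner ℝ (g w) (w - x) : ℝ) - inner ℝ (g x) (w - x) =
          inner ℝ (g w - g x) (w - x) := by rw [inner_sub_left]
      have h5 : ‖x - w‖ = ‖w - x‖ := norm_sub_rev x w
      rw [h2, h5] at h1
      nlinarith [h1, h3, h4]
    · have h1 := key x w
      nlinarith [h1, sq_nonneg ‖w - x‖]
  -- conclude HasGradientAt
  rw [hasGradientAt_iff_hasFDerivAt]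
  rw [hasFDerivAt_iff_isLittleO_nhds_zero]
  have hO : (fun h : EuclideanSpace ℝ (Fin n) =>
      E (x + h) - E x - (InnerProductSpace.toDual ℝ _ (g x)) h) =O[nhds 0]
      fun h => ‖h‖ ^ 2 := by
    rw [Asymptotics.isBigO_iff]
    refine ⟨r / 2 + L, Filter.Eventually.of_forall fun h => ?_⟩
    have := hbound (x + h)
    simp only [add_sub_cancel_left] at this
    simp only [Real.norm_eq_abs]
    have hsq : |‖h‖ ^ 2| = ‖h‖ ^ 2 := abs_of_nonneg (sq_nonneg _)
    rw [hsq]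
    calc |E (x + h) - E x - (InnerProductSpace.toDual ℝ _ (g x)) h| =
          |E (x + h) - E x - inner ℝ (g x) h| := by
            rw [InnerProductSpace.toDual_apply_apply]
      _ ≤ (r / 2 + L) * ‖h‖ ^ 2 := this
  refine hO.trans_isLittleO ?_
  rw [Asymptotics.isLittleO_iff]
  intro c hc
  filter_upwards [Metric.ball_mem_nhds (0 : EuclideanSpace ℝ (Fin n)) hc] with h hh
  rw [Metric.mem_ball, dist_zero_right] at hh
  rw [Real.norm_eq_abs, abs_of_nonneg (sq_nonneg _)]
  nlinarith [norm_nonneg h, hh]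
end

section
/- Let f₁,...,f_m : ℝ^n → ℝ ∪ {∞} be proper, lsc, convex, and bounded below, let r > 0 and λ ∈ Λ. Then argmin_x PA_r(x,λ) = argmin_x Σ_{i=1}^m λ_i e_r f_i(x), where PA_r(x,λ) := -e_{r+δ(λ)}( -Σ_i λ_i e_r f_i )(x). -/
open scoped RealInnerProductSpace

private lemma ereal_coe_sum {m : ℕ} (g : Fin m → ℝ) :
    ((∑ i, g i : ℝ) : EReal) = ∑ i, ((g i : ℝ) : EReal) :=
  map_sum (⟨⟨(fun x : ℝ => (x : EReal)), rfl⟩, fun x y => EReal.coe_add x y⟩ : ℝ →+ EReal)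
    g Finset.univ

private lemma quad_ineq {E : Type*} [NormedAddCommGroup E] [InnerProductSpace ℝ E]
    {r s : ℝ} (hr : 0 < r) (hrs : r ≤ s) (v z y : E) :
    ⟪v, z - y⟫ + r / 2 * ‖z - y‖ ^ 2 ≤ s / 2 * ‖y - (z + r⁻¹ • v)‖ ^ 2 := by
  have hsmul : r • (y - (z + r⁻¹ • v)) = r • (y - z) - v := by
    rw [smul_sub, smul_sub, smul_add, smul_smul, mul_inv_cancel₀ hr.ne', one_smul]
    abel
  have hN : r ^ 2 * ‖y - (z + r⁻¹ • v)‖ ^ 2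
      = r ^ 2 * ‖z - y‖ ^ 2 + 2 * r * ⟪v, z - y⟫ + ‖v‖ ^ 2 := by
    have h1 : ‖r • (y - (z + r⁻¹ • v))‖ ^ 2 = r ^ 2 * ‖y - (z + r⁻¹ • v)‖ ^ 2 := by
      rw [norm_smul, mul_pow, Real.norm_eq_abs, sq_abs]
    have h2 : ‖r • (y - z) - v‖ ^ 2
        = r ^ 2 * ‖y - z‖ ^ 2 - 2 * (r * ⟪y - z, v⟫) + ‖v‖ ^ 2 := by
      rw [norm_sub_sq_real, real_inner_smul_left, norm_smul, Real.norm_eq_abs, mul_pow, sq_abs]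
    rw [hsmul, h2] at h1
    have h3 : ‖y - z‖ = ‖z - y‖ := norm_sub_rev y z
    have h4 : ⟪y - z, v⟫ = -⟪v, z - y⟫ := by
      rw [← neg_sub z y, inner_neg_left, real_inner_comm (z - y) v]
    rw [h3, h4] at h1
    linarith [h1]
  have hNpos : 0 ≤ ‖y - (z + r⁻¹ • v)‖ ^ 2 := sq_nonneg _
  have hB : 0 ≤ ‖v‖ ^ 2 := sq_nonneg _
  have h4 : 0 ≤ s - r := sub_nonneg.2 hrs
  have hrN : r * (r ^ 2 * ‖y - (z + r⁻¹ • v)‖ ^ 2)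
      = r * (r ^ 2 * ‖z - y‖ ^ 2 + 2 * r * ⟪v, z - y⟫ + ‖v‖ ^ 2) := by rw [hN]
  have main : 2 * r ^ 2 * (⟪v, z - y⟫ + r / 2 * ‖z - y‖ ^ 2)
      ≤ 2 * r ^ 2 * (s / 2 * ‖y - (z + r⁻¹ • v)‖ ^ 2) := by
    nlinarith [hN, hrN, mul_nonneg (mul_nonneg h4 (sq_nonneg r)) hNpos,
      mul_nonneg hr.le hB]
  have h2r : (0:ℝ) < 2 * r ^ 2 := by positivity
  exact le_of_mul_le_mul_left main h2r

theorem argmin_ncProxAverage_eq {n m : ℕ}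
    (f : Fin m → EuclideanSpace ℝ (Fin n) → EReal)
    (hne_bot : ∀ i x, f i x ≠ ⊥) (hproper : ∀ i, ∃ x, f i x ≠ ⊤)
    (hlsc : ∀ i, LowerSemicontinuous (f i))
    (hconv : ∀ i, ∀ x y : EuclideanSpace ℝ (Fin n), ∀ a b : ℝ, 0 ≤ a → 0 ≤ b → a + b = 1 →
      f i (a • x + b • y) ≤ (a : EReal) * f i x + (b : EReal) * f i y)
    (hbdd : ∀ i, ∃ c : ℝ, ∀ x, (c : EReal) ≤ f i x)
    (r : ℝ) (hr : 0 < r)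
    (δ : (Fin m → ℝ) → ℝ)
    (hδcont : ContinuousOn δ (simplex m))
    (hδnn : ∀ lam ∈ simplex m, 0 ≤ δ lam)
    (hδ0 : ∀ lam ∈ simplex m, (δ lam = 0 ↔ ∃ i, lam = Pi.single i 1))
    (lam : Fin m → ℝ) (hlam : lam ∈ simplex m) :
    {x | ∀ z, -(moreau (r + δ lam)
          (fun y => -(∑ i, (lam i : EReal) * moreau r (f i) y)) x) ≤
        -(moreau (r + δ lam)
          (fun y => -(∑ i, (lam i : EReal) * moreau r (f i) y)) z)} =
    {x | ∀ z, (∑ i, (lam i : EReal) * moreau r (f i) x) ≤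
        ∑ i, (lam i : EReal) * moreau r (f i) z} := by
  obtain ⟨hlam0, hlam1⟩ := hlam
  set s := r + δ lam with hs_def
  have hrs : r ≤ s := le_add_of_nonneg_right (hδnn lam ⟨hlam0, hlam1⟩)
  -- Moreau envelopes are real-valued
  have hne_bot' : ∀ i (x : EuclideanSpace ℝ (Fin n)), moreau r (f i) x ≠ ⊥ := by
    intro i x
    obtain ⟨c, hc⟩ := hbdd i
    have : (c : EReal) ≤ moreau r (f i) x := by
      refine le_iInf fun y => le_trans (hc y) (le_add_of_nonneg_right ?_)
      exact_mod_cast EReal.coe_nonneg.2 (by positivity)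
    exact ((EReal.bot_lt_coe c).trans_le this).ne'
  have hne_top' : ∀ i (x : EuclideanSpace ℝ (Fin n)), moreau r (f i) x ≠ ⊤ := by
    intro i x
    obtain ⟨x₀, hx₀⟩ := hproper i
    have h1 : moreau r (f i) x ≤ f i x₀ + (((r / 2) * ‖x₀ - x‖ ^ 2 : ℝ) : EReal) :=
      iInf_le _ x₀
    have h2 : f i x₀ + (((r / 2) * ‖x₀ - x‖ ^ 2 : ℝ) : EReal) < ⊤ :=
      EReal.add_lt_top (lt_top_iff_ne_top.2 hx₀).ne (EReal.coe_lt_top _).ne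
    exact (h1.trans_lt h2).ne
  set E : Fin m → EuclideanSpace ℝ (Fin n) → ℝ := fun i x => (moreau r (f i) x).toReal with hE_def
  have hE : ∀ i (x : EuclideanSpace ℝ (Fin n)), ((E i x : ℝ) : EReal) = moreau r (f i) x := fun i x =>
    EReal.coe_toReal (hne_top' i x) (hne_bot' i x)
  set g : EuclideanSpace ℝ (Fin n) → ℝ := fun x => ∑ i, lam i * E i x with hg_def
  have hg : ∀ x : EuclideanSpace ℝ (Fin n), (∑ i, (lam i : EReal) * moreau r (f i) x) = ((g x : ℝ) : EReal) := by
    intro x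
    rw [hg_def, ereal_coe_sum]
    exact Finset.sum_congr rfl fun i _ => by rw [← hE, ← EReal.coe_mul]
  -- epsilon-optimal points for each Moreau envelope
  have hex : ∀ i (z : EuclideanSpace ℝ (Fin n)), ∀ ε : ℝ, 0 < ε → ∃ (w : EuclideanSpace ℝ (Fin n)) (a : ℝ),
      a + r / 2 * ‖w - z‖ ^ 2 ≤ E i z + ε ∧ ∀ y, E i y ≤ a + r / 2 * ‖w - y‖ ^ 2 := by
    intro i z ε hε
    have hlt : moreau r (f i) z < ((E i z + ε : ℝ) : EReal) := by
      rw [← hE i z, EReal.coe_lt_coe_iff]; linarith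
    rw [moreau, iInf_lt_iff] at hlt
    obtain ⟨w, hw⟩ := hlt
    have hwtop : f i w ≠ ⊤ := by
      intro h
      rw [h] at hw
      rw [EReal.top_add_of_ne_bot (EReal.coe_ne_bot _)] at hw
      exact (not_top_lt hw)
    set a : ℝ := (f i w).toReal with ha_def
    have hfa : f i w = (a : EReal) := (EReal.coe_toReal hwtop (hne_bot i w)).symm
    refine ⟨w, a, ?_, ?_⟩
    · rw [hfa, ← EReal.coe_add, EReal.coe_lt_coe_iff] at hw
      linarith [hw]
    · intro y
      have h1 : moreau r (f i) y ≤ f i w + (((r / 2) * ‖w - y‖ ^ 2 : ℝ) : EReal) := iInf_le _ w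
      rw [← hE i y, hfa, ← EReal.coe_add, EReal.coe_le_coe_iff] at h1
      linarith [h1]
  -- Key approximate quadratic upper bound
  have keyA : ∀ (z : EuclideanSpace ℝ (Fin n)), ∀ ε : ℝ, 0 < ε → ∃ v : EuclideanSpace ℝ (Fin n),
      ∀ y, g y ≤ g z + ε + ⟪v, z - y⟫ + r / 2 * ‖z - y‖ ^ 2 := by
    intro z ε hε
    choose w a hwa hEy using fun i => hex i z ε hε
    refine ⟨r • ∑ i, lam i • (w i - z), fun y => ?_⟩
    have hper : ∀ i, E i y ≤ E i z + ε + r * ⟪w i - z, z - y⟫ + r / 2 * ‖z - y‖ ^ 2 := by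
      intro i
      have h1 := hEy i y
      have hexpand : ‖w i - y‖ ^ 2 = ‖w i - z‖ ^ 2 + 2 * ⟪w i - z, z - y⟫ + ‖z - y‖ ^ 2 := by
        have : w i - y = (w i - z) + (z - y) := by abel
        rw [this, norm_add_sq_real]
      rw [hexpand] at h1
      have h2 := hwa i
      nlinarith [h1, h2]
    have hinner : ⟪r • ∑ i, lam i • (w i - z), z - y⟫
        = ∑ i, lam i * (r * ⟪w i - z, z - y⟫) := by
      rw [real_inner_smul_left, sum_inner, Finset.mul_sum]
      exact Finset.sum_congr rfl fun i _ => by rw [real_inner_smul_left]; ring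
    calc g y = ∑ i, lam i * E i y := rfl
      _ ≤ ∑ i, lam i * (E i z + ε + r * ⟪w i - z, z - y⟫ + r / 2 * ‖z - y‖ ^ 2) :=
          Finset.sum_le_sum fun i _ => mul_le_mul_of_nonneg_left (hper i) (hlam0 i)
      _ = g z + ε + ⟪r • ∑ i, lam i • (w i - z), z - y⟫ + r / 2 * ‖z - y‖ ^ 2 := by
          rw [hinner]
          simp only [mul_add, Finset.sum_add_distrib, ← Finset.sum_mul, hlam1, one_mul]
          rfl
  -- at a minimizer, the linear term is small
  have keyC : ∀ (x v : EuclideanSpace ℝ (Fin n)) (ε : ℝ), 0 < ε → (∀ z', g x ≤ g z') →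
      (∀ y, g y ≤ g x + ε + ⟪v, x - y⟫ + r / 2 * ‖x - y‖ ^ 2) → ‖v‖ ^ 2 ≤ 2 * r * ε := by
    intro x v ε hε hmin hv
    have h1 := hv (x + r⁻¹ • v)
    have h2 : x - (x + r⁻¹ • v) = -(r⁻¹ • v) := by abel
    rw [h2] at h1
    have h3 : ⟪v, -(r⁻¹ • v)⟫ = -(r⁻¹ * ‖v‖ ^ 2) := by
      rw [inner_neg_right, real_inner_smul_right, real_inner_self_eq_norm_sq]
    have h4 : ‖-(r⁻¹ • v)‖ ^ 2 = r⁻¹ ^ 2 * ‖v‖ ^ 2 := by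
      rw [norm_neg, norm_smul, mul_pow, Real.norm_eq_abs, sq_abs]
    rw [h3, h4] at h1
    have h5 := hmin (x + r⁻¹ • v)
    have h6 : r⁻¹ * ‖v‖ ^ 2 - r / 2 * (r⁻¹ ^ 2 * ‖v‖ ^ 2) ≤ ε := by linarith [h1, h5]
    have hkey : ‖v‖ ^ 2 = 2 * r * (r⁻¹ * ‖v‖ ^ 2 - r / 2 * (r⁻¹ ^ 2 * ‖v‖ ^ 2)) := by
      field_simp
      ring
    rw [hkey]
    exact mul_le_mul_of_nonneg_left h6 (by positivity)
  -- quadratic growth at minimizers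
  have hquad_min : ∀ x : EuclideanSpace ℝ (Fin n), (∀ z', g x ≤ g z') → ∀ y, g y ≤ g x + s / 2 * ‖y - x‖ ^ 2 := by
    intro x hmin y
    have : ∀ η : ℝ, 0 < η → g y ≤ g x + s / 2 * ‖y - x‖ ^ 2 + η := by
      intro η hη
      set C := ‖y - x‖ with hC_def
      have hC0 : 0 ≤ C := norm_nonneg _
      set ε := min (η / 2) (η ^ 2 / (8 * r * (C ^ 2 + 1))) with hε_def
      have h8 : 0 < 8 * r * (C ^ 2 + 1) := by positivity
      have hεpos : 0 < ε := lt_min (by linarith) (by positivity)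
      obtain ⟨v, hv⟩ := keyA x ε hεpos
      have hv2 : ‖v‖ ^ 2 ≤ 2 * r * ε := keyC x v ε hεpos hmin hv
      have hb := hv y
      have hCx : ‖x - y‖ = C := norm_sub_rev x y
      have hi : ⟪v, x - y⟫ ≤ ‖v‖ * C := by
        rw [← hCx]; exact real_inner_le_norm v (x - y)
      have hε1 : ε ≤ η / 2 := min_le_left _ _
      have hε2 : ε * (8 * r * (C ^ 2 + 1)) ≤ η ^ 2 := by
        have := min_le_right (η / 2) (η ^ 2 / (8 * r * (C ^ 2 + 1)))
        calc ε * (8 * r * (C ^ 2 + 1)) ≤ (η ^ 2 / (8 * r * (C ^ 2 + 1))) * (8 * r * (C ^ 2 + 1)) :=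
              mul_le_mul_of_nonneg_right this h8.le
          _ = η ^ 2 := div_mul_cancel₀ _ h8.ne'
      have hvc : ‖v‖ ^ 2 * C ^ 2 ≤ 2 * r * ε * C ^ 2 :=
        mul_le_mul_of_nonneg_right hv2 (sq_nonneg C)
      rw [hCx] at hb
      have hvnn : 0 ≤ ‖v‖ := norm_nonneg _
      have hvC : ‖v‖ * C ≤ η / 2 := by
        nlinarith [sq_nonneg (2 * (‖v‖ * C) - η), hvc, hε2, mul_nonneg hvnn hC0,
          mul_nonneg hr.le hεpos.le, sq_nonneg C, hη, hεpos]
      have hsr : r / 2 * C ^ 2 ≤ s / 2 * C ^ 2 := by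
        have h9 : 0 ≤ (s - r) * C ^ 2 := mul_nonneg (sub_nonneg.2 hrs) (sq_nonneg C)
        nlinarith [h9]
      linarith [hb, hi, hvC, hε1, hsr]
    exact le_of_forall_pos_le_add this
  -- Rewrite the sets in terms of g
  have hFeq : (fun y : EuclideanSpace ℝ (Fin n) => -(∑ i, (lam i : EReal) * moreau r (f i) y))
      = fun y : EuclideanSpace ℝ (Fin n) => ((-(g y) : ℝ) : EReal) := by
    funext y; rw [hg y, EReal.coe_neg]
  set F : EuclideanSpace ℝ (Fin n) → EReal := fun y : EuclideanSpace ℝ (Fin n) => ((-(g y) : ℝ) : EReal) with hF_def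
  set M : EuclideanSpace ℝ (Fin n) → EReal := fun x => moreau s F x with hM_def
  have hM_le : ∀ x : EuclideanSpace ℝ (Fin n), M x ≤ ((-(g x) : ℝ) : EReal) := by
    intro x
    have h1 : M x ≤ F x + (((s / 2) * ‖x - x‖ ^ 2 : ℝ) : EReal) := iInf_le _ x
    simpa [sub_self, norm_zero, hF_def] using h1
  have hM_lb : ∀ (x' : EuclideanSpace ℝ (Fin n)), (∀ y, g y ≤ g x' + s / 2 * ‖y - x'‖ ^ 2) →
      ∀ y : EuclideanSpace ℝ (Fin n), ((-(g x') : ℝ) : EReal) ≤ F y + (((s / 2) * ‖y - x'‖ ^ 2 : ℝ) : EReal) := by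
    intro x' h y
    rw [hF_def, ← EReal.coe_add, EReal.coe_le_coe_iff]
    have := h y
    linarith [this]
  have hM_ge : ∀ (z : EuclideanSpace ℝ (Fin n)), ∀ ε : ℝ, 0 < ε → ∃ x' : EuclideanSpace ℝ (Fin n), ((-(g z) - ε : ℝ) : EReal) ≤ M x' := by
    intro z ε hε
    obtain ⟨v, hv⟩ := keyA z ε hε
    refine ⟨z + r⁻¹ • v, le_iInf fun y => ?_⟩
    rw [hF_def, ← EReal.coe_add, EReal.coe_le_coe_iff]
    have h1 := hv y
    have h2 := quad_ineq hr hrs v z y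
    have : g y ≤ g z + ε + s / 2 * ‖y - (z + r⁻¹ • v)‖ ^ 2 := by linarith
    linarith
  ext x
  simp only [Set.mem_setOf_eq, hFeq, ← hM_def, hg, EReal.coe_le_coe_iff, EReal.neg_le_neg_iff]
  constructor
  · intro hx z
    refine le_of_forall_pos_le_add fun ε hε => ?_
    obtain ⟨x', hx'⟩ := hM_ge z ε hε
    have h1 : ((-(g z) - ε : ℝ) : EReal) ≤ ((-(g x) : ℝ) : EReal) :=
      hx'.trans ((hx x').trans (hM_le x))
    rw [EReal.coe_le_coe_iff] at h1
    linarith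
  · intro hx z
    refine le_iInf fun y => ?_
    have h1 : M z ≤ ((-(g x) : ℝ) : EReal) := by
      refine (hM_le z).trans ?_
      rw [EReal.coe_le_coe_iff]
      linarith [hx z]
    refine h1.trans ?_
    have h2 : ∀ y', g y' ≤ g x + s / 2 * ‖y' - x‖ ^ 2 := hquad_min x hx
    exact hM_lb x h2 y
end
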